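/- arXiv:cs/0703036 — 2 statements merged into one kernel-verified Lean document; each statement's English description precedes it below -/
import Mathlib

section
/- If G acts 2-transitively by left multiplication on G/H (equivalently |H\G/H| = 2), then in the orbit code {ρ(g)W : g ∈ G} there is exactly one set of principal angles between distinct elements, i.e. all pairs of distinct subspaces in the orbit have the same set of principal angles. -/
open scoped Matrix

/-- Orthogonal projection onto a subspace, as an endomorphism. -/
noncomputable def proj {n : ℕ} (W : Submodule ℂ (EuclideanSpace ℂ (Fin n))) :
    EuclideanSpace ℂ (Fin n) →ₗ[ℂ] EuclideanSpace ℂ (Fin n) :=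
  W.subtype ∘ₗ (W.orthogonalProjection).toLinearMap

/-- Squared chordal distance between two subspaces:
`Trace(Π_P) - Trace(Π_P Π_Q)`. -/
noncomputable def dc2 {n : ℕ} (P Q : Submodule ℂ (EuclideanSpace ℂ (Fin n))) : ℝ :=
  (LinearMap.trace ℂ _ (proj P) - LinearMap.trace ℂ _ (proj P ∘ₗ proj Q)).re

/-- The action of a group element on `ℂⁿ` through a unitary representation. -/
noncomputable def act {n : ℕ} {G : Type*} [Group G]
    (ρ : G →* Matrix.unitaryGroup (Fin n) ℂ) (g : G) :
    EuclideanSpace ℂ (Fin n) →ₗ[ℂ] EuclideanSpace ℂ (Fin n) :=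
  Matrix.toEuclideanLin (ρ g : Matrix (Fin n) (Fin n) ℂ)

/-- Irreducibility of a unitary matrix representation. -/
def IsIrred {n : ℕ} {G : Type*} [Group G] (ρ : G →* Matrix.unitaryGroup (Fin n) ℂ) : Prop :=
  ∀ U : Submodule ℂ (EuclideanSpace ℂ (Fin n)), (∀ g : G, U.map (act ρ g) ≤ U) → U = ⊥ ∨ U = ⊤

/-- The character of a unitary matrix representation. -/
noncomputable def charOf {n : ℕ} {G : Type*} [Group G]
    (ρ : G →* Matrix.unitaryGroup (Fin n) ℂ) (g : G) : ℂ :=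
  (ρ g : Matrix (Fin n) (Fin n) ℂ).trace

/-- `χ` is the character of some irreducible unitary representation of `G`. -/
def IsIrredChar {G : Type*} [Group G] (χ : G → ℂ) : Prop :=
  ∃ (d : ℕ) (σ : G →* Matrix.unitaryGroup (Fin d) ℂ), IsIrred σ ∧ ∀ g, χ g = charOf σ g

/-- Two pairs of subspaces have the same set of principal angles iff they are in the same
orbit of the unitary group. -/
def samePA {n : ℕ} (P Q P' Q' : Submodule ℂ (EuclideanSpace ℂ (Fin n))) : Prop :=
  ∃ U : EuclideanSpace ℂ (Fin n) ≃ₗᵢ[ℂ] EuclideanSpace ℂ (Fin n),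
    P.map U.toLinearEquiv.toLinearMap = P' ∧ Q.map U.toLinearEquiv.toLinearMap = Q'

/-- The isotypic subspace of a unitary representation `ρ` of `H` associated to a character
`χ` : the sum of all `H`-invariant subspaces on which the representation has character `χ`. -/
noncomputable def isotypic {n : ℕ} {H : Type*} [Group H]
    (ρ : H →* Matrix.unitaryGroup (Fin n) ℂ) (χ : H → ℂ) :
    Submodule ℂ (EuclideanSpace ℂ (Fin n)) :=
  sSup {U : Submodule ℂ (EuclideanSpace ℂ (Fin n)) |
    ∃ hU : ∀ (h : H), ∀ x ∈ U, act ρ h x ∈ U,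
      ∀ h : H, LinearMap.trace ℂ U ((act ρ h).restrict (hU h)) = χ h}

/-- Squared chordal distance in terms of projection matrices. -/
noncomputable def dc2M {ι : Type*} [Fintype ι] (P Q : Matrix ι ι ℂ) : ℝ :=
  (P.trace - (P * Q).trace).re


section AuxStmt4

variable {n : ℕ} {G : Type*} [Group G] (ρ : G →* Matrix.unitaryGroup (Fin n) ℂ)

lemma act_mul' (a b : G) : act ρ (a * b) = act ρ a ∘ₗ act ρ b := by
  ext x
  simp [act, Matrix.toEuclideanLin_apply, Matrix.mulVec_mulVec]

lemma act_one' : act ρ 1 = LinearMap.id := by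
  ext x
  simp [act, Matrix.toEuclideanLin_apply]

lemma act_inner' (g : G) (x y : EuclideanSpace ℂ (Fin n)) :
    inner ℂ (act ρ g x) (act ρ g y) = (inner ℂ x y : ℂ) := by
  have h1 : (act ρ g).adjoint (act ρ g y) = y := by
    rw [act, ← Matrix.toEuclideanLin_conjTranspose_eq_adjoint]
    have h0 : ((ρ g : Matrix (Fin n) (Fin n) ℂ)ᴴ * (ρ g : Matrix (Fin n) (Fin n) ℂ)) = 1 := by
      rw [← Matrix.star_eq_conjTranspose]
      exact (ρ g).prop.1
    have h2 : Matrix.toEuclideanLin ((ρ g : Matrix (Fin n) (Fin n) ℂ)ᴴ)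
        (Matrix.toEuclideanLin ((ρ g : Matrix (Fin n) (Fin n) ℂ)) y)
        = Matrix.toEuclideanLin ((ρ g : Matrix (Fin n) (Fin n) ℂ)ᴴ *
            (ρ g : Matrix (Fin n) (Fin n) ℂ)) y := by
      simp [Matrix.toEuclideanLin_apply, Matrix.mulVec_mulVec]
    rw [h2, h0]
    simp [Matrix.toEuclideanLin_apply]
  calc inner ℂ ((act ρ g) x) ((act ρ g) y)
      = (inner ℂ x ((act ρ g).adjoint ((act ρ g) y)) : ℂ) :=
        (LinearMap.adjoint_inner_right (act ρ g) x _).symm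
    _ = inner ℂ x y := by rw [h1]

/-- `act ρ g` as a linear equivalence. -/
noncomputable def actEquiv (g : G) :
    EuclideanSpace ℂ (Fin n) ≃ₗ[ℂ] EuclideanSpace ℂ (Fin n) :=
  LinearEquiv.ofLinear (act ρ g) (act ρ g⁻¹)
    (by rw [← act_mul', mul_inv_cancel, act_one'])
    (by rw [← act_mul', inv_mul_cancel, act_one'])

/-- `act ρ g` as a linear isometry equivalence. -/
noncomputable def actIso (g : G) :
    EuclideanSpace ℂ (Fin n) ≃ₗᵢ[ℂ] EuclideanSpace ℂ (Fin n) :=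
  (actEquiv ρ g).isometryOfInner (fun x y => act_inner' ρ g x y)

lemma actIso_toLinearMap (g : G) :
    (actIso ρ g).toLinearEquiv.toLinearMap = act ρ g := rfl

lemma map_act_map_act (W : Submodule ℂ (EuclideanSpace ℂ (Fin n))) (a b : G) :
    (W.map (act ρ a)).map (act ρ b) = W.map (act ρ (b * a)) := by
  rw [act_mul', Submodule.map_comp]

lemma map_act_eq_iff (H : Subgroup G) (W : Submodule ℂ (EuclideanSpace ℂ (Fin n)))
    (hstab : ∀ g : G, W.map (act ρ g) = W ↔ g ∈ H) (a b : G) :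
    W.map (act ρ a) = W.map (act ρ b) ↔ (QuotientGroup.mk a : G ⧸ H) = QuotientGroup.mk b := by
  rw [QuotientGroup.eq]
  constructor
  · intro h
    have h2 := congrArg (Submodule.map (act ρ a⁻¹)) h.symm
    rw [map_act_map_act, map_act_map_act, inv_mul_cancel, act_one', Submodule.map_id] at h2
    exact (hstab _).mp h2
  · intro h
    have h2 := (hstab _).mpr h
    have h3 := congrArg (Submodule.map (act ρ a)) h2
    rw [map_act_map_act, ← mul_assoc, mul_inv_cancel, one_mul] at h3
    exact h3.symm

end AuxStmt4

/-- if `G` acts 2-transitively on `G/H`, `H` the stabilizer of `W`, then all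
pairs of distinct subspaces in the orbit of `W` have the same set of principal angles. -/
theorem stmt4 {G : Type*} [Group G] [Fintype G] {n : ℕ}
    (ρ : G →* Matrix.unitaryGroup (Fin n) ℂ) (H : Subgroup G)
    (W : Submodule ℂ (EuclideanSpace ℂ (Fin n)))
    (hstab : ∀ g : G, W.map (act ρ g) = W ↔ g ∈ H)
    (h2t : ∀ a b c d : G ⧸ H, a ≠ b → c ≠ d → ∃ g : G, g • a = c ∧ g • b = d) :
    ∀ g₁ g₂ g₃ g₄ : G, W.map (act ρ g₁) ≠ W.map (act ρ g₂) →
      W.map (act ρ g₃) ≠ W.map (act ρ g₄) →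
        samePA (W.map (act ρ g₁)) (W.map (act ρ g₂))
          (W.map (act ρ g₃)) (W.map (act ρ g₄)) := by
  intro g₁ g₂ g₃ g₄ h12 h34
  have hne12 : (QuotientGroup.mk g₁ : G ⧸ H) ≠ QuotientGroup.mk g₂ :=
    fun h => h12 ((map_act_eq_iff ρ H W hstab g₁ g₂).mpr h)
  have hne34 : (QuotientGroup.mk g₃ : G ⧸ H) ≠ QuotientGroup.mk g₄ :=
    fun h => h34 ((map_act_eq_iff ρ H W hstab g₃ g₄).mpr h)
  obtain ⟨g, hg1, hg2⟩ := h2t _ _ _ _ hne12 hne34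
  have hs1 : (QuotientGroup.mk (g * g₁) : G ⧸ H) = QuotientGroup.mk g₃ := hg1
  have hs2 : (QuotientGroup.mk (g * g₂) : G ⧸ H) = QuotientGroup.mk g₄ := hg2
  refine ⟨actIso ρ g, ?_, ?_⟩
  · rw [actIso_toLinearMap, map_act_map_act]
    exact (map_act_eq_iff ρ H W hstab _ _).mpr hs1
  · rw [actIso_toLinearMap, map_act_map_act]
    exact (map_act_eq_iff ρ H W hstab _ _).mpr hs2
end

section
/- If G acts 2-transitively on G/H and W is a direct sum of H-isotypic subspaces for ρ↓_H with stabilizer containing H, then the stabilizer of W in G is exactly H (H is maximal in G since the action is 2-transitive, and the stabilizer is a proper subgroup containing H whenever W is not G-invariant); consequently the orbit of W has cardinality |G|/|H|. -/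
open scoped Matrix

lemma act_mul'_s9 {n : ℕ} {G : Type*} [Group G]
    (ρ : G →* Matrix.unitaryGroup (Fin n) ℂ) (g h : G) :
    act ρ (g * h) = act ρ g ∘ₗ act ρ h := by
  ext x
  simp [act, Matrix.toEuclideanLin_apply, Matrix.mulVec_mulVec]

lemma act_one'_s9 {n : ℕ} {G : Type*} [Group G]
    (ρ : G →* Matrix.unitaryGroup (Fin n) ℂ) :
    act ρ (1 : G) = LinearMap.id := by
  ext x
  simp [act, Matrix.toEuclideanLin_apply]

lemma map_act_mul {n : ℕ} {G : Type*} [Group G]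
    (ρ : G →* Matrix.unitaryGroup (Fin n) ℂ) (g h : G)
    (W : Submodule ℂ (EuclideanSpace ℂ (Fin n))) :
    W.map (act ρ (g * h)) = (W.map (act ρ h)).map (act ρ g) := by
  rw [act_mul'_s9, Submodule.map_comp]

lemma subgroup_eq_top_of_2t {G : Type*} [Group G] (H : Subgroup G)
    (h2t : ∀ a b c d : G ⧸ H, a ≠ b → c ≠ d → ∃ g : G, g • a = c ∧ g • b = d)
    {K : Subgroup G} (hHK : H ≤ K) {k : G} (hkK : k ∈ K) (hkH : k ∉ H) : K = ⊤ := by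
  ext g
  simp only [Subgroup.mem_top, iff_true]
  by_cases hg : g ∈ H
  · exact hHK hg
  · have hb : ((k : G ⧸ H)) ≠ ((1 : G) : G ⧸ H) := by
      intro h
      exact hkH (by simpa using QuotientGroup.eq.mp h.symm)
    have hd : ((g : G ⧸ H)) ≠ ((1 : G) : G ⧸ H) := by
      intro h
      exact hg (by simpa using QuotientGroup.eq.mp h.symm)
    obtain ⟨x, hx1, hx2⟩ :=
      h2t ((1 : G) : G ⧸ H) (k : G ⧸ H) ((1 : G) : G ⧸ H) (g : G ⧸ H) hb.symm hd.symm
    have hxH : x ∈ H := by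
      have : ((x : G ⧸ H)) = ((1 : G) : G ⧸ H) := by simpa using hx1
      simpa using QuotientGroup.eq.mp this.symm
    have : ((x * k : G) : G ⧸ H) = (g : G ⧸ H) := by simpa using hx2
    have hmem : (x * k)⁻¹ * g ∈ H := QuotientGroup.eq.mp this
    have : g = (x * k) * ((x * k)⁻¹ * g) := by group
    rw [this]
    exact K.mul_mem (K.mul_mem (hHK hxH) hkK) (hHK hmem)

/-- under the hypotheses of the main construction, the stabilizer of `W` in
`G` is exactly `H`, and consequently the orbit of `W` has cardinality `|G|/|H|`. -/
theorem stmt9 {G : Type*} [Group G] [Fintype G] (H : Subgroup G) [Fintype ↥H] {n s : ℕ}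
    (ρ : G →* Matrix.unitaryGroup (Fin n) ℂ) (hirr : IsIrred ρ)
    (h2t : ∀ a b c d : G ⧸ H, a ≠ b → c ≠ d → ∃ g : G, g • a = c ∧ g • b = d)
    (hred : ∃ U : Submodule ℂ (EuclideanSpace ℂ (Fin n)),
      (∀ h : ↥H, U.map (act (ρ.comp H.subtype) h) ≤ U) ∧ U ≠ ⊥ ∧ U ≠ ⊤)
    (χ : Fin s → ↥H → ℂ) (hχ : ∀ i, IsIrredChar (χ i))
    (hdist : ∀ i j, i ≠ j → χ i ≠ χ j)
    (W : Submodule ℂ (EuclideanSpace ℂ (Fin n)))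
    (hW : W = ⨆ i : Fin s, isotypic (ρ.comp H.subtype) (χ i))
    (hH : ∀ h ∈ H, W.map (act ρ h) = W)
    (hW0 : 0 < Module.finrank ℂ W) (hWn : Module.finrank ℂ W < n) :
    (∀ g : G, W.map (act ρ g) = W ↔ g ∈ H) ∧
      Nat.card {V : Submodule ℂ (EuclideanSpace ℂ (Fin n)) | ∃ g : G, V = W.map (act ρ g)} =
        Fintype.card G / Fintype.card ↥H := by
  set K : Subgroup G :=
    { carrier := {g | W.map (act ρ g) = W}
      one_mem' := by simp [act_one'_s9]
      mul_mem' := by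
        intro a b ha hb
        simp only [Set.mem_setOf_eq] at *
        rw [map_act_mul, hb, ha]
      inv_mem' := by
        intro a ha
        simp only [Set.mem_setOf_eq] at *
        conv_lhs => rw [← ha]
        rw [← map_act_mul, inv_mul_cancel, act_one'_s9, Submodule.map_id] } with hK
  have hHK : H ≤ K := fun h hh => hH h hh
  have hKtop : K ≠ ⊤ := by
    intro htop
    have hall : ∀ g : G, W.map (act ρ g) ≤ W := by
      intro g
      have : g ∈ K := htop ▸ Subgroup.mem_top g
      exact le_of_eq this
    rcases hirr W hall with h | h
    · rw [h] at hW0; simp at hW0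
    · rw [h] at hWn
      rw [finrank_top, finrank_euclideanSpace_fin] at hWn
      exact lt_irrefl n hWn
  have hstab : ∀ g : G, W.map (act ρ g) = W ↔ g ∈ H := by
    intro g
    constructor
    · intro hg
      by_contra hgH
      exact hKtop (subgroup_eq_top_of_2t H h2t hHK hg hgH)
    · exact fun hg => hH g hg
  refine ⟨hstab, ?_⟩
  let f : G ⧸ H → {V : Submodule ℂ (EuclideanSpace ℂ (Fin n)) | ∃ g : G, V = W.map (act ρ g)} :=
    fun q => Quotient.liftOn' q (fun g => ⟨W.map (act ρ g), g, rfl⟩) (by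
      intro a b hab
      have h' : a⁻¹ * b ∈ H := (QuotientGroup.leftRel_apply).mp hab
      have heq : W.map (act ρ b) = W.map (act ρ a) := by
        have hb : b = a * (a⁻¹ * b) := by group
        rw [hb, map_act_mul, hH _ h']
      exact Subtype.ext heq.symm)
  have hbij : Function.Bijective f := by
    constructor
    · intro a b hab
      induction a using Quotient.inductionOn'
      induction b using Quotient.inductionOn'
      rename_i a b
      have : W.map (act ρ a) = W.map (act ρ b) := congrArg Subtype.val hab
      have hmem : a⁻¹ * b ∈ H := by
        rw [← hstab]
        rw [map_act_mul]
        rw [← this, ← map_act_mul, inv_mul_cancel, act_one'_s9, Submodule.map_id]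
      exact Quotient.sound' ((QuotientGroup.leftRel_apply).mpr hmem)
    · rintro ⟨V, g, rfl⟩
      exact ⟨QuotientGroup.mk g, rfl⟩
  have hcard : Nat.card
      {V : Submodule ℂ (EuclideanSpace ℂ (Fin n)) | ∃ g : G, V = W.map (act ρ g)} =
      Nat.card (G ⧸ H) := (Nat.card_congr (Equiv.ofBijective f hbij)).symm
  rw [hcard, ← Subgroup.index_eq_card]
  have := Subgroup.card_mul_index H
  rw [← Nat.card_eq_fintype_card, ← Nat.card_eq_fintype_card (α := ↥H)]
  have hpos : 0 < Nat.card ↥H := Nat.card_pos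
  rw [← this]
  exact (Nat.mul_div_cancel_left _ hpos).symm
end
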